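/- The hypotenusal numbers satisfy a[i] ≤ a[i-1]² for all i ≥ 4, and a[i] ≤ 2^(2^i) for all i ≥ 4. Combined with the lower bound, 2^(2^(i-2)+1) ≤ a[i] ≤ 2^(2^i) for i ≥ 4. -/

import Mathlib

open Finset

/-- Generalized binomial coefficient `C(x, j)` for integers `x` and `j`:
`0` for `j < 0`, and the usual polynomial extension otherwise. -/
def izchoose (x : ℤ) (j : ℤ) : ℤ :=
  if j < 0 then 0
  else if 0 ≤ x then ((x.toNat).choose j.toNat : ℤ)
  else (-1) ^ j.toNat * (((j - x - 1).toNat).choose j.toNat : ℤ)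

/-- `kBinDecomp k m t a` : `m = C(a 0, k) + C(a 1, k-1) + ⋯ + C(a t, k - t)` is the
`k`-binomial (cascade) decomposition of `m`, with `a 0 > a 1 > ⋯ > a t ≥ k - t ≥ 1`. -/
def kBinDecomp (k m t : ℕ) (a : ℕ → ℕ) : Prop :=
  t + 1 ≤ k ∧ (∀ i, i < t → a (i + 1) < a i) ∧ k - t ≤ a t ∧
    m = ∑ i ∈ Finset.range (t + 1), (a i).choose (k - i)

/-- Full `k`-binomial decomposition: `m = C(α 0, k) + ⋯ + C(α (k-1), 1)` with
`α 0 > ⋯ > α (k-2) ≥ α (k-1) ≥ 1` and all coefficients at least `1`. -/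
def fullKBinDecomp (k m : ℕ) (α : ℕ → ℕ) : Prop :=
  (∀ i, i + 1 ≤ k - 2 → α (i + 1) < α i) ∧ (2 ≤ k → α (k - 1) ≤ α (k - 2)) ∧
    (∀ i, i < k → 1 ≤ α i) ∧ m = ∑ i ∈ Finset.range k, (α i).choose (k - i)

/-- `(β 0, …, β (k-1))` is the shadow `k`-binomial decomposition of the family `S`:
for every `0 ≤ i ≤ k-1`, `|∂^i S| = C(β 0, k-i) + C(β 1, k-1-i) + ⋯ + C(β (k-1), 1-i)`,
where generalized integer binomial coefficients are used. -/
def shadowDecomp {n : ℕ} (k : ℕ) (S : Finset (Finset (Fin n))) (β : ℕ → ℤ) : Prop :=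
  ∀ i, i < k → ((Finset.shadow^[i] S).card : ℤ) =
    ∑ j ∈ Finset.range k, izchoose (β j) ((k : ℤ) - i - j)

/-- `S` is extremal for the Kruskal–Katona theorem: the cardinality of its lower shadow
equals the Kruskal–Katona lower bound determined by the `k`-binomial decomposition of `|S|`. -/
def IsExtremal {n : ℕ} (k : ℕ) (S : Finset (Finset (Fin n))) : Prop :=
  ∃ t a, kBinDecomp k S.card t a ∧
    (Finset.shadow S).card = ∑ i ∈ Finset.range (t + 1), (a i).choose (k - 1 - i)

/-- `S` is an initial segment in the colexicographic order among `k`-subsets of `Fin n`. -/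
def IsInitColex (n k : ℕ) (S : Finset (Finset (Fin n))) : Prop :=
  (∀ s ∈ S, s.card = k) ∧
    ∀ s ∈ S, ∀ t : Finset (Fin n), t.card = k → toColex t < toColex s → t ∈ S


/-- Hamilton's numbers (rational-valued), following the classical recursion. -/
def hamilton : ℕ → ℚ
  | 0 => 2
  | 1 => 2
  | (m + 2) =>
      2 + ∑ i ∈ Finset.range (m + 1),
        (-1 : ℚ) ^ (i + 2) *
          (∏ j ∈ Finset.range (i + 2), (hamilton (m + 1 - i) - (j : ℚ))) / ((i + 2).factorial : ℚ)
  termination_by m => m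
  decreasing_by simp_wf <;> omega

/-- The hypotenusal numbers `a[n]` (OEIS A001660): `a[0] = 1` and
`a[n] = h[n+1] - h[n]` for `n > 0`, where `h` are Hamilton's numbers.
(`hypot 1 = 1`, `hypot 2 = 2`, `hypot 3 = 6`, `hypot 4 = 36`, `hypot 5 = 876`, …) -/
def hypot (i : ℕ) : ℚ := if i = 0 then 1 else hamilton (i + 1) - hamilton i

def Hz : ℕ → ℤ
  | 0 => 2
  | 1 => 2
  | (m + 2) =>
      2 + ∑ i ∈ Finset.range (m + 1),
        (-1 : ℤ) ^ i * (((Hz (m + 1 - i)).toNat.choose (i + 2) : ℤ))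
  termination_by m => m
  decreasing_by simp_wf <;> omega

lemma Hz0 : Hz 0 = 2 := by simp [Hz]
lemma Hz1 : Hz 1 = 2 := by simp [Hz]
lemma Hz2 : Hz 2 = 3 := by simp [Hz, Finset.sum_range_succ]
lemma Hz3 : Hz 3 = 5 := by
  show Hz (1+2) = 5
  rw [Hz]; norm_num [Finset.sum_range_succ, Hz2, Hz1]; decide
lemma Hz4 : Hz 4 = 11 := by
  show Hz (2+2) = 11
  rw [Hz]; norm_num [Finset.sum_range_succ, Hz3, Hz2, Hz1]; decide
lemma Hz5 : Hz 5 = 47 := by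
  show Hz (3+2) = 47
  rw [Hz]; norm_num [Finset.sum_range_succ, Hz4, Hz3, Hz2, Hz1]; decide
lemma Hz6 : Hz 6 = 923 := by
  show Hz (4+2) = 923
  rw [Hz]; norm_num [Finset.sum_range_succ, Hz5, Hz4, Hz3, Hz2, Hz1]; decide

lemma alt_bounds : ∀ (n : ℕ) (t : ℕ → ℤ), (∀ i, 0 ≤ t i) → (∀ i, t (i+1) ≤ t i) →
    0 ≤ ∑ i ∈ Finset.range n, (-1:ℤ)^i * t i ∧ ∑ i ∈ Finset.range n, (-1:ℤ)^i * t i ≤ t 0 := by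
  intro n
  induction n with
  | zero => intro t h0 _; simpa using h0 0
  | succ n ih =>
    intro t h0 h1
    have ih' := ih (fun i => t (i+1)) (fun i => h0 (i+1)) (fun i => h1 (i+1))
    rw [Finset.sum_range_succ']
    have e : ∑ i ∈ Finset.range n, (-1:ℤ)^(i+1) * t (i+1)
        = - ∑ i ∈ Finset.range n, (-1:ℤ)^i * t (i+1) := by
      rw [← Finset.sum_neg_distrib]
      exact Finset.sum_congr rfl (fun i _ => by ring)
    simp only [pow_zero, one_mul] at *
    constructor
    · simp only [e]; linarith [ih'.2, h1 0]
    · simp only [e]; linarith [ih'.1]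

lemma alt_lower (n : ℕ) (hn : 1 ≤ n) (t : ℕ → ℤ) (h0 : ∀ i, 0 ≤ t i) (h1 : ∀ i, t (i+1) ≤ t i) :
    t 0 - t 1 ≤ ∑ i ∈ Finset.range n, (-1:ℤ)^i * t i := by
  cases n with
  | zero => omega
  | succ m =>
  rw [Finset.sum_range_succ']
  have ih' := alt_bounds m (fun i => t (i+1)) (fun i => h0 (i+1)) (fun i => h1 (i+1))
  have e : ∑ i ∈ Finset.range m, (-1:ℤ)^(i+1) * t (i+1)
      = - ∑ i ∈ Finset.range m, (-1:ℤ)^i * t (i+1) := by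
    rw [← Finset.sum_neg_distrib]
    exact Finset.sum_congr rfl (fun i _ => by ring)
  simp only [e, pow_zero, one_mul]
  linarith [ih'.2]

lemma choose2' (N : ℕ) : 2 * (N.choose 2 : ℤ) = N * (N - 1) := by
  induction N with
  | zero => rfl
  | succ m ih =>
    rw [Nat.choose_succ_succ]
    push_cast
    rw [Nat.choose_one_right]
    linear_combination ih

lemma choose3' (N : ℕ) : 6 * (N.choose 3 : ℤ) = N * (N - 1) * (N - 2) := by
  induction N with
  | zero => rfl
  | succ m ih =>
    rw [Nat.choose_succ_succ]
    push_cast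
    linear_combination 3 * choose2' m + ih

lemma chain_aux (a b : ℕ) (hb : 11 ≤ b) (hba : b ≤ a) (h1 : b^3 ≤ a^2) (h2 : a ≤ b^2) :
    ∀ j, 2 ≤ j → b * b.choose j ≤ a.choose j := by
  intro j hj
  induction j with
  | zero => omega
  | succ j ih =>
    rcases Nat.lt_or_ge j 2 with hj2 | hj2
    · have hj1 : j = 1 := by omega
      subst hj1
      zify
      have c2a := choose2' a
      have c2b := choose2' b
      have hb' : (11:ℤ) ≤ b := by exact_mod_cast hb
      have hba' : (b:ℤ) ≤ a := by exact_mod_cast hba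
      have h1' : (b:ℤ)^3 ≤ (a:ℤ)^2 := by exact_mod_cast h1
      have h2' : (a:ℤ) ≤ (b:ℤ)^2 := by exact_mod_cast h2
      nlinarith [c2a, c2b]
    · have ihj := ih hj2
      have kb := Nat.choose_succ_right_eq b j
      have ka := Nat.choose_succ_right_eq a j
      apply Nat.le_of_mul_le_mul_right _ (Nat.succ_pos j)
      calc b * b.choose (j+1) * (j+1) = b * (b.choose (j+1) * (j+1)) := by ring
        _ = b * (b.choose j * (b - j)) := by rw [kb]
        _ = (b * b.choose j) * (b - j) := by ring
        _ ≤ a.choose j * (a - j) := Nat.mul_le_mul ihj (Nat.sub_le_sub_right hba j)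
        _ = a.choose (j+1) * (j+1) := by rw [ka]

lemma chain (a b j : ℕ) (hb : 11 ≤ b) (hba : b ≤ a) (h1 : b^3 ≤ a^2) (h2 : a ≤ b^2)
    (hj : 2 ≤ j) : b.choose (j+1) ≤ a.choose j := by
  have h := chain_aux a b hb hba h1 h2 j hj
  have kb := Nat.choose_succ_right_eq b j
  calc b.choose (j+1) ≤ b.choose (j+1) * (j+1) := Nat.le_mul_of_pos_right _ (Nat.succ_pos j)
    _ = b.choose j * (b - j) := kb
    _ ≤ b.choose j * b := Nat.mul_le_mul_left _ (Nat.sub_le b j)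
    _ = b * b.choose j := Nat.mul_comm _ _
    _ ≤ a.choose j := h

def HInv (n : ℕ) : Prop :=
  11 ≤ Hz n ∧ (Hz n)^2 ≤ 3 * Hz (n+1) ∧ 2 * Hz (n+1) ≤ (Hz n)^2 + 4 ∧
    (Hz n)^3 + 3 * Hz (n+1) ≤ (Hz (n+1))^2

lemma levelLem (k j : ℕ) (hj : 2 ≤ j) (hInv : 4 ≤ k → HInv k) :
    (Hz k).toNat.choose (j+1) ≤ (Hz (k+1)).toNat.choose j := by
  match k with
  | 0 =>
    rw [Hz0, show ((2:ℤ).toNat) = 2 from rfl, Nat.choose_eq_zero_of_lt (by omega)]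
    exact Nat.zero_le _
  | 1 =>
    rw [Hz1, show ((2:ℤ).toNat) = 2 from rfl, Nat.choose_eq_zero_of_lt (by omega)]
    exact Nat.zero_le _
  | 2 =>
    rw [Hz2, show (2:ℕ)+1 = 3 from rfl, Hz3, show ((3:ℤ).toNat) = 3 from rfl,
      show ((5:ℤ).toNat) = 5 from rfl]
    rcases Nat.lt_or_ge j 3 with h | h
    · have hj2 : j = 2 := by omega
      subst hj2; decide
    · rw [Nat.choose_eq_zero_of_lt (by omega)]; exact Nat.zero_le _
  | 3 =>
    rw [Hz3, show (3:ℕ)+1 = 4 from rfl, Hz4, show ((5:ℤ).toNat) = 5 from rfl,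
      show ((11:ℤ).toNat) = 11 from rfl]
    rcases Nat.lt_or_ge j 5 with h | h
    · interval_cases j <;> decide
    · rw [Nat.choose_eq_zero_of_lt (by omega)]; exact Nat.zero_le _
  | (k+4) =>
    obtain ⟨hg, h2, h3, h4⟩ := hInv (by omega)
    have hb0 : (0:ℤ) ≤ Hz (k+4) := by linarith
    have ha121 : (121:ℤ) ≤ 3 * Hz (k+5) := by nlinarith
    have ha41 : (41:ℤ) ≤ Hz (k+5) := by omega
    have hB : ((Hz (k+4)).toNat : ℤ) = Hz (k+4) := Int.toNat_of_nonneg hb0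
    have hA : ((Hz (k+5)).toNat : ℤ) = Hz (k+5) := Int.toNat_of_nonneg (by linarith)
    have e45 : k + 4 + 1 = k + 5 := rfl
    rw [e45]
    apply chain _ _ _ _ _ _ _ hj
    · have : (11:ℤ) ≤ ((Hz (k+4)).toNat : ℤ) := by rw [hB]; exact hg
      exact_mod_cast this
    · have hba : Hz (k+4) ≤ Hz (k+5) := by nlinarith
      have : ((Hz (k+4)).toNat : ℤ) ≤ ((Hz (k+5)).toNat : ℤ) := by rw [hA, hB]; exact hba
      exact_mod_cast this
    · have : ((Hz (k+4)).toNat : ℤ)^3 ≤ ((Hz (k+5)).toNat : ℤ)^2 := by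
        rw [hA, hB]; nlinarith
      exact_mod_cast this
    · have : ((Hz (k+5)).toNat : ℤ) ≤ ((Hz (k+4)).toNat : ℤ)^2 := by
        rw [hA, hB]; nlinarith
      exact_mod_cast this

lemma Hz_rec (m : ℕ) : Hz (m+2) = 2 + ∑ i ∈ Finset.range (m+1),
    (-1:ℤ)^i * (((Hz (m+1-i)).toNat.choose (i+2)) : ℤ) := by
  rw [Hz]

lemma Hz_bounds (m : ℕ) (hm : 1 ≤ m) (hInv : ∀ k, 4 ≤ k → k ≤ m → HInv k) :
    Hz (m+2) ≤ 2 + (((Hz (m+1)).toNat.choose 2 : ℕ) : ℤ) ∧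
    2 + (((Hz (m+1)).toNat.choose 2 : ℕ) : ℤ) - (((Hz m).toNat.choose 3 : ℕ) : ℤ) ≤ Hz (m+2) ∧
    2 ≤ Hz (m+2) := by
  have h0 : ∀ i, 0 ≤ (fun i => (((Hz (m+1-i)).toNat.choose (i+2) : ℕ) : ℤ)) i :=
    fun i => Int.natCast_nonneg _
  have h1 : ∀ i, (fun i => (((Hz (m+1-i)).toNat.choose (i+2) : ℕ) : ℤ)) (i+1)
      ≤ (fun i => (((Hz (m+1-i)).toNat.choose (i+2) : ℕ) : ℤ)) i := by
    intro i
    simp only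
    rcases Nat.lt_or_ge m i with h | h
    · have e1 : m + 1 - (i+1) = 0 := by omega
      rw [e1, Hz0, show ((2:ℤ).toNat) = 2 from rfl, Nat.choose_eq_zero_of_lt (by omega)]
      exact Int.natCast_nonneg _
    · have e1 : m + 1 - i = (m - i) + 1 := by omega
      have e2 : m + 1 - (i+1) = m - i := by omega
      rw [e1, e2]
      have := levelLem (m-i) (i+2) (by omega) (fun h4 => hInv (m-i) h4 (by omega))
      have e3 : i + 2 + 1 = i + 3 := rfl
      exact_mod_cast this
  have U := (alt_bounds (m+1) _ h0 h1).2
  have P := (alt_bounds (m+1) _ h0 h1).1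
  have L := alt_lower (m+1) (by omega) _ h0 h1
  simp only [Nat.sub_zero, Nat.add_sub_cancel] at U L
  rw [Hz_rec]
  refine ⟨by linarith, by linarith, by linarith⟩
lemma prod_sub_cast (N : ℕ) : ∀ K : ℕ, ∏ j ∈ Finset.range K, ((N:ℚ) - j) = (N.descFactorial K : ℚ) := by
  intro K
  induction K with
  | zero => simp
  | succ K ih =>
    rw [Finset.prod_range_succ, ih, Nat.descFactorial_succ]
    rcases Nat.lt_or_ge N K with h | h
    · rw [Nat.descFactorial_eq_zero_iff_lt.2 h]
      simp
    · have : ((N - K : ℕ) : ℚ) = (N:ℚ) - K := by push_cast [h]; ring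
      rw [← this]
      push_cast
      ring

lemma ham_step (m : ℕ) (IH : ∀ k, k < m+2 → hamilton k = ((Hz k : ℤ) : ℚ) ∧ 0 ≤ Hz k) :
    hamilton (m+2) = ((Hz (m+2) : ℤ) : ℚ) := by
  rw [hamilton, Hz_rec]
  push_cast
  congr 1
  refine Finset.sum_congr rfl (fun i hi => ?_)
  have hmem : i < m + 1 := Finset.mem_range.mp hi
  obtain ⟨he, hnn⟩ := IH (m+1-i) (by omega)
  have hcast : hamilton (m+1-i) = (((Hz (m+1-i)).toNat : ℕ) : ℚ) := by
    rw [he]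
    norm_cast
    exact (Int.toNat_of_nonneg hnn).symm
  rw [hcast, prod_sub_cast, Nat.descFactorial_eq_factorial_mul_choose]
  have hf : (((i+2).factorial : ℕ) : ℚ) ≠ 0 := Nat.cast_ne_zero.2 (Nat.factorial_ne_zero _)
  have hsgn : (-1:ℚ)^(i+2) = (-1)^i := by ring
  push_cast
  rw [hsgn]
  field_simp
lemma stepII (g h h' : ℤ) (hg : 11 ≤ g) (hI4 : g^3 + 3*h ≤ h^2)
    (L6 : 12 + 3*(h*(h-1)) - g*(g-1)*(g-2) ≤ 6*h') : h^2 ≤ 3*h' := by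
  nlinarith [mul_nonneg (by linarith : (0:ℤ) ≤ g) (by linarith : (0:ℤ) ≤ g - 1)]

lemma stepIV (h h' : ℤ) (hh : 41 ≤ h) (A : h^2 ≤ 3*h') (B : 2*h' ≤ h^2 + 4) :
    h^3 + 3*h' ≤ h'^2 := by
  nlinarith [sq_nonneg (3*h' - h^2), mul_pos (by linarith : (0:ℤ) < h) (by linarith : (0:ℤ) < h),
    mul_pos (mul_pos (by linarith : (0:ℤ) < h) (by linarith : (0:ℤ) < h))
      (by linarith : (0:ℤ) < h)]

lemma stepA (g h h' : ℤ) (hg : 11 ≤ g) (hI2 : g^2 ≤ 3*h) (U2 : 2*h' ≤ 4 + h*(h-1)) :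
    h' - h ≤ (h - g)^2 := by
  have h11g : 11*g ≤ g*g := by nlinarith
  nlinarith [mul_nonneg (by linarith : (0:ℤ) ≤ 3*h - 11*g) (by linarith : (0:ℤ) ≤ 3*h - g)]

lemma stepB (g h h' : ℤ) (hg : 11 ≤ g) (hI2 : g^2 ≤ 3*h)
    (L6 : 12 + 3*(h*(h-1)) - g*(g-1)*(g-2) ≤ 6*h') :
    (h - g)^2 ≤ 2*(h' - h) := by
  have hh : 3*g ≤ h := by nlinarith
  nlinarith [mul_nonneg (by linarith : (0:ℤ) ≤ g) (by linarith : (0:ℤ) ≤ 3*h - g^2),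
    mul_nonneg (by linarith : (0:ℤ) ≤ g - 11) (by linarith : (0:ℤ) ≤ h)]

lemma master : ∀ n : ℕ, hamilton n = ((Hz n : ℤ) : ℚ) ∧ 2 ≤ Hz n ∧ (4 ≤ n → HInv n) := by
  intro n
  induction n using Nat.strong_induction_on with
  | _ n ih =>
  have IH : ∀ k, k < n → hamilton k = ((Hz k : ℤ) : ℚ) ∧ 0 ≤ Hz k :=
    fun k hk => ⟨(ih k hk).1, by linarith [(ih k hk).2.1]⟩
  match n, IH, ih with
  | 0, _, _ => exact ⟨by rw [hamilton, Hz0]; norm_num, by rw [Hz0], by omega⟩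
  | 1, _, _ => exact ⟨by rw [hamilton, Hz1]; norm_num, by rw [Hz1], by omega⟩
  | 2, IH, _ => exact ⟨ham_step 0 IH, by rw [Hz2]; norm_num, by omega⟩
  | 3, IH, _ => exact ⟨ham_step 1 IH, by rw [Hz3]; norm_num, by omega⟩
  | 4, IH, _ =>
    refine ⟨ham_step 2 IH, by rw [Hz4]; norm_num, fun _ => ?_⟩
    refine ⟨?_, ?_, ?_, ?_⟩ <;> norm_num [Hz4, Hz5]
  | 5, IH, _ =>
    refine ⟨ham_step 3 IH, by rw [Hz5]; norm_num, fun _ => ?_⟩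
    refine ⟨?_, ?_, ?_, ?_⟩ <;> norm_num [Hz5, Hz6]
  | (mm+6), IH, ih =>
    have hInvAll : ∀ k, 4 ≤ k → k ≤ mm + 5 → HInv k :=
      fun k h1 h2 => (ih k (by omega)).2.2 h1
    have HB1 := Hz_bounds (mm+4) (by omega) (fun k h1 h2 => hInvAll k h1 (by omega))
    have HB2 := Hz_bounds (mm+5) (by omega) hInvAll
    have hInvPrev : HInv (mm+5) := hInvAll (mm+5) (by omega) (le_refl _)
    obtain ⟨hg11, hI2, hI3, hI4⟩ := hInvPrev
    have e56 : mm + 5 + 1 = mm + 6 := rfl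
    rw [e56] at hI2 hI3 hI4
    have e46 : mm + 4 + 2 = mm + 6 := rfl
    have e47 : mm + 5 + 2 = mm + 7 := rfl
    have e57 : mm + 6 + 1 = mm + 7 := rfl
    rw [e46] at HB1
    rw [e47] at HB2
    have hg0 : (0:ℤ) ≤ Hz (mm+5) := by linarith
    have hh2 : (2:ℤ) ≤ Hz (mm+6) := HB1.2.2
    have hh121 : (121:ℤ) ≤ 3 * Hz (mm+6) := by nlinarith
    have hh41 : (41:ℤ) ≤ Hz (mm+6) := by omega
    have hHe : ((Hz (mm+6)).toNat : ℤ) = Hz (mm+6) := Int.toNat_of_nonneg (by linarith)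
    have hGe : ((Hz (mm+5)).toNat : ℤ) = Hz (mm+5) := Int.toNat_of_nonneg hg0
    have c2 := choose2' (Hz (mm+6)).toNat
    rw [hHe] at c2
    have c3 := choose3' (Hz (mm+5)).toNat
    rw [hGe] at c3
    obtain ⟨U, L, _⟩ := HB2
    have L6 : 12 + 3*(Hz (mm+6) * (Hz (mm+6) - 1))
        - Hz (mm+5) * (Hz (mm+5) - 1) * (Hz (mm+5) - 2) ≤ 6 * Hz (mm+7) := by
      linarith [L, c2, c3]
    have U2 : 2 * Hz (mm+7) ≤ 4 + Hz (mm+6) * (Hz (mm+6) - 1) := by linarith [U, c2]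
    refine ⟨ham_step (mm+4) IH, by linarith, fun _ => ?_⟩
    have gII := stepII (Hz (mm+5)) (Hz (mm+6)) (Hz (mm+7)) hg11 hI4 L6
    have gIII : 2 * Hz (mm+7) ≤ (Hz (mm+6))^2 + 4 := by nlinarith [U2, hh2]
    have gIV := stepIV (Hz (mm+6)) (Hz (mm+7)) hh41 gII gIII
    refine ⟨by linarith, ?_, ?_, ?_⟩
    · rw [e57]; exact gII
    · rw [e57]; exact gIII
    · rw [e57]; exact gIV
lemma keyAB (m : ℕ) :
    Hz (m+6) - Hz (m+5) ≤ (Hz (m+5) - Hz (m+4))^2 ∧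
    (Hz (m+5) - Hz (m+4))^2 ≤ 2*(Hz (m+6) - Hz (m+5)) := by
  have HB := Hz_bounds (m+4) (by omega) (fun k h1 h2 => (master k).2.2 h1)
  have e46 : m+4+2 = m+6 := rfl
  have e45 : m+4+1 = m+5 := rfl
  rw [e46, e45] at HB
  obtain ⟨hg11, hI2, hI3, hI4⟩ := (master (m+4)).2.2 (by omega)
  rw [e45] at hI2 hI3 hI4
  have hg0 : (0:ℤ) ≤ Hz (m+4) := by linarith
  have hh121 : (121:ℤ) ≤ 3 * Hz (m+5) := by nlinarith
  have hHe : ((Hz (m+5)).toNat : ℤ) = Hz (m+5) := Int.toNat_of_nonneg (by linarith)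
  have hGe : ((Hz (m+4)).toNat : ℤ) = Hz (m+4) := Int.toNat_of_nonneg hg0
  have c2 := choose2' (Hz (m+5)).toNat
  rw [hHe] at c2
  have c3 := choose3' (Hz (m+4)).toNat
  rw [hGe] at c3
  obtain ⟨U, L, _⟩ := HB
  have L6 : 12 + 3*(Hz (m+5) * (Hz (m+5) - 1))
      - Hz (m+4) * (Hz (m+4) - 1) * (Hz (m+4) - 2) ≤ 6 * Hz (m+6) := by
    linarith [L, c2, c3]
  have U2 : 2 * Hz (m+6) ≤ 4 + Hz (m+5) * (Hz (m+5) - 1) := by linarith [U, c2]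
  exact ⟨stepA (Hz (m+4)) (Hz (m+5)) (Hz (m+6)) hg11 hI2 U2,
    stepB (Hz (m+4)) (Hz (m+5)) (Hz (m+6)) hg11 hI2 L6⟩

lemma hyp_eq (i : ℕ) (hi : 1 ≤ i) : hypot i = ((Hz (i+1) - Hz i : ℤ) : ℚ) := by
  rw [hypot, if_neg (by omega), (master (i+1)).1, (master i).1]
  push_cast
  ring

lemma mainInd : ∀ i, 4 ≤ i →
    Hz (i+1) - Hz i ≤ 2^(2^i) ∧ 2^(2^(i-2)+1) ≤ Hz (i+1) - Hz i := by
  intro i hi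
  induction i, hi using Nat.le_induction with
  | base => rw [show (4:ℕ)+1 = 5 from rfl, Hz5, Hz4]; norm_num
  | succ n hn ihn =>
    obtain ⟨m, rfl⟩ : ∃ m, n = m + 4 := ⟨n - 4, by omega⟩
    have K := keyAB m
    have e1 : m+4+1 = m+5 := rfl
    have e2 : m+5+1 = m+6 := rfl
    have e3 : m+5-2 = m+3 := rfl
    have e4 : m+4-2 = m+2 := rfl
    rw [e1, e2, e3]
    rw [e1, e4] at ihn
    obtain ⟨ih1, ih2⟩ := ihn
    have h0 : (0:ℤ) ≤ Hz (m+5) - Hz (m+4) :=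
      le_trans (by positivity) ih2
    constructor
    · have sq := pow_le_pow_left₀ h0 ih1 2
      have e : ((2:ℤ)^(2^(m+4)))^2 = 2^(2^(m+5)) := by
        rw [← pow_mul, ← pow_succ]
      calc Hz (m+6) - Hz (m+5) ≤ (Hz (m+5) - Hz (m+4))^2 := K.1
        _ ≤ ((2:ℤ)^(2^(m+4)))^2 := sq
        _ = 2^(2^(m+5)) := e
    · have sq := pow_le_pow_left₀ (by positivity : (0:ℤ) ≤ 2^(2^(m+2)+1)) ih2 2
      have e : ((2:ℤ)^(2^(m+2)+1))^2 = 2^(2^(m+3)+1) * 2 := by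
        rw [← pow_mul, show (2^(m+2)+1)*2 = 2^(m+3)+1+1 from by rw [pow_succ]; ring,
          pow_succ]
      rw [e] at sq
      linarith [K.2, sq]

/-- Upper bounds for the hypotenusal numbers: `a[i] ≤ a[i-1]²` and `a[i] ≤ 2^(2^i)` for
`i ≥ 4`; combined with the lower bound, `2^(2^(i-2)+1) ≤ a[i] ≤ 2^(2^i)` for `i ≥ 4`. -/
theorem stmt16 :
    ∀ i, 4 ≤ i →
      hypot i ≤ (hypot (i - 1)) ^ 2 ∧
      hypot i ≤ (2 : ℚ) ^ (2 ^ i) ∧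
      (2 : ℚ) ^ (2 ^ (i - 2) + 1) ≤ hypot i := by
  intro i hi
  have hEq : hypot i = ((Hz (i+1) - Hz i : ℤ) : ℚ) := hyp_eq i (by omega)
  have hEq1 : hypot (i-1) = ((Hz i - Hz (i-1) : ℤ) : ℚ) := by
    have h := hyp_eq (i-1) (by omega)
    rw [show i-1+1 = i from by omega] at h
    exact h
  refine ⟨?_, ?_, ?_⟩
  · rcases Nat.lt_or_ge i 5 with h5 | h5
    · have h4 : i = 4 := by omega
      subst h4
      rw [hEq, hEq1]
      norm_num [show (4:ℕ)+1 = 5 from rfl, show (4:ℕ)-1 = 3 from rfl, Hz5, Hz4, Hz3]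
    · obtain ⟨m, rfl⟩ : ∃ m, i = m+5 := ⟨i-5, by omega⟩
      have K := (keyAB m).1
      rw [hEq, hEq1, show m+5-1 = m+4 from rfl, show m+5+1 = m+6 from rfl]
      exact_mod_cast K
  · have h := (mainInd i hi).1
    rw [hEq]
    calc ((Hz (i+1) - Hz i : ℤ) : ℚ) ≤ (((2:ℤ)^(2^i) : ℤ) : ℚ) := by exact_mod_cast h
      _ = (2:ℚ)^(2^i) := by push_cast; ring
  · have h := (mainInd i hi).2
    rw [hEq]
    calc (2:ℚ)^(2^(i-2)+1) = (((2:ℤ)^(2^(i-2)+1) : ℤ) : ℚ) := by push_cast; ring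
      _ ≤ ((Hz (i+1) - Hz i : ℤ) : ℚ) := by exact_mod_cast h
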